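/- arXiv:1402.3346 — 4 statements merged into one kernel-verified Lean document; each statement's English description precedes it below -/
import Mathlib

section
/- For any center z ∈ {0,1}^k and any strictly positive vector (q_x)_{x ∈ B} indexed by the radius-1 Hamming ball B around z, there exists a strictly positive product distribution s on {0,1}^k (i.e., s(x) = ∏_{i=1}^k s_i(x_i) with each s_i a strictly positive distribution on {0,1}) such that the restriction of s to B is proportional to (q_x)_{x ∈ B}. -/
private lemma ball_char (k : ℕ) (z x : Fin k → Bool) (h : hammingDist x z ≤ 1) :
    x = z ∨ ∃ j, x = Function.update z j (!z j) := by
  have hcard : (Finset.univ.filter fun i => x i ≠ z i).card ≤ 1 := h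
  rcases Nat.le_one_iff_eq_zero_or_eq_one.mp hcard with h0 | h1
  · left
    have := Finset.card_eq_zero.mp h0
    funext i
    by_contra hi
    have hmem : i ∈ (Finset.univ.filter fun i => x i ≠ z i) := by
      simp [hi]
    rw [this] at hmem
    exact absurd hmem (Finset.notMem_empty i)
  · right
    obtain ⟨j, hj⟩ := Finset.card_eq_one.mp h1
    refine ⟨j, funext fun i => ?_⟩
    by_cases hij : i = j
    · subst hij
      have hji : i ∈ (Finset.univ.filter fun i => x i ≠ z i) := by
        rw [hj]; exact Finset.mem_singleton_self i
      have : x i ≠ z i := by simpa using hji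
      simp only [Function.update_self]
      cases hx : x i <;> cases hz : z i <;> simp_all
    · have hni : i ∉ (Finset.univ.filter fun i => x i ≠ z i) := by
        rw [hj]; simpa using hij
      have : x i = z i := by simpa using hni
      rw [this, Function.update_of_ne hij]

private lemma update_mem_ball (k : ℕ) (z : Fin k → Bool) (j : Fin k) :
    hammingDist (Function.update z j (!z j)) z ≤ 1 := by
  have hsub : (Finset.univ.filter fun i => Function.update z j (!z j) i ≠ z i) ⊆ {j} := by
    intro i hi
    simp only [Finset.mem_filter, Finset.mem_univ, true_and] at hi
    by_contra hij
    simp only [Finset.mem_singleton] at hij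
    exact hi (by rw [Function.update_of_ne hij])
  calc hammingDist (Function.update z j (!z j)) z
      = (Finset.univ.filter fun i => Function.update z j (!z j) i ≠ z i).card := rfl
    _ ≤ ({j} : Finset (Fin k)).card := Finset.card_le_card hsub
    _ = 1 := Finset.card_singleton j

/-- For any center `z ∈ {0,1}^k` and any strictly positive vector `q` indexed by the radius-1
Hamming ball around `z`, there is a strictly positive product distribution `s` on `{0,1}^k`
whose restriction to the ball is proportional to `q`. -/
theorem product_dist_on_hamming_ball (k : ℕ) (z : Fin k → Bool)
    (q : (Fin k → Bool) → ℝ) (hq : ∀ x, hammingDist x z ≤ 1 → 0 < q x) :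
    ∃ s : Fin k → Bool → ℝ,
      (∀ i b, 0 < s i b) ∧ (∀ i, s i false + s i true = 1) ∧
      ∃ c : ℝ, 0 < c ∧ ∀ x, hammingDist x z ≤ 1 → (∏ i, s i (x i)) = c * q x := by
  have hz0 : 0 < q z := hq z (by simp [hammingDist_self])
  set r : Fin k → ℝ := fun i => q (Function.update z i (!z i)) / q z with hr
  have hrpos : ∀ i, 0 < r i := fun i =>
    div_pos (hq _ (update_mem_ball k z i)) hz0
  have hd : ∀ i, (0:ℝ) < 1 + r i := fun i => by linarith [hrpos i]
  clear_value r
  set s : Fin k → Bool → ℝ := fun i b => if b = z i then 1 / (1 + r i) else r i / (1 + r i)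
    with hs
  have hspos : ∀ i b, 0 < s i b := by
    intro i b
    have hsb : s i b = if b = z i then 1 / (1 + r i) else r i / (1 + r i) := by rw [hs]
    rw [hsb]
    split
    · exact div_pos one_pos (hd i)
    · exact div_pos (hrpos i) (hd i)
  have hsz : ∀ i, s i (z i) = 1 / (1 + r i) := fun i => by simp [hs]
  have hsnz : ∀ i, s i (!z i) = r i / (1 + r i) := fun i => by simp [hs]
  refine ⟨s, hspos, ?_, (∏ i, 1 / (1 + r i)) / q z, ?_, ?_⟩
  · intro i
    have hne : (1 + r i) ≠ 0 := ne_of_gt (hd i)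
    cases hzi : z i <;> simp [hs, hzi] <;> field_simp <;> ring
  · exact div_pos (Finset.prod_pos fun i _ => div_pos one_pos (hd i)) hz0
  · intro x hx
    rcases ball_char k z x hx with rfl | ⟨j, rfl⟩
    · rw [div_mul_cancel₀ _ (ne_of_gt hz0)]
      exact Finset.prod_congr rfl fun i _ => hsz i
    · have h1 : ∏ i, s i (Function.update z j (!z j) i)
          = s j (!z j) * ∏ i ∈ Finset.univ.erase j, (1 / (1 + r i)) := by
        rw [← Finset.mul_prod_erase Finset.univ _ (Finset.mem_univ j)]
        congr 1
        · simp
        · exact Finset.prod_congr rfl fun i hi => by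
            rw [Function.update_of_ne (Finset.ne_of_mem_erase hi), hsz]
      have h2 : ∏ i, (1 / (1 + r i))
          = (1 / (1 + r j)) * ∏ i ∈ Finset.univ.erase j, (1 / (1 + r i)) :=
        (Finset.mul_prod_erase _ _ (Finset.mem_univ j)).symm
      have hqupd : q (Function.update z j (!z j)) = r j * q z := by
        rw [hr]; field_simp
      rw [h1, h2, hsnz, hqupd]
      rw [div_eq_mul_inv (1 / (1 + r j) * _), mul_assoc]
      have hcancel : (q z)⁻¹ * (r j * q z) = r j := by
        field_simp
      rw [hcancel]
      ring
end

section
/- Let q be a probability distribution on {0,1}^n and let σ: {0,1}^n → {0,...,2^n−1} be a bijection. Define weights λ_{ỹ} := 1 − q(ỹ)/(1 − ∑_{ỹ': σ(ỹ')>σ(ỹ)} q(ỹ')) for ỹ with the denominator nonzero, and λ_{ỹ} := 0 when σ(ỹ) = 0 or the denominator vanishes. Then λ_{ỹ} ∈ [0,1] for all ỹ, and q(y) = ∑_{ỹ} (∏_{ỹ': σ(ỹ')>σ(ỹ)} λ_{ỹ'}) (1 − λ_{ỹ}) δ_{ỹ}(y) for all y ∈ {0,1}^n, where δ_{ỹ}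 is the Dirac measure at ỹ. -/
/-- A probability distribution `q` on `{0,1}^n` is realized by `2^n - 1` sequential probability
sharing steps: the weights `λ_y` lie in `[0,1]` and `q` equals the resulting mixture of Dirac
measures. Here `σ` is a bijection `{0,1}^n → {0,…,2^n-1}`. -/
theorem sharing_steps_representation (n : ℕ) (q : (Fin n → Bool) → ℝ)
    (hq0 : ∀ y, 0 ≤ q y) (hq1 : ∑ y, q y = 1)
    (σ : (Fin n → Bool) → ℕ) (hσinj : Function.Injective σ)
    (hσlt : ∀ y, σ y < 2 ^ n) :
    let denom : (Fin n → Bool) → ℝ := fun yt =>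
      1 - ∑ y' ∈ Finset.univ.filter (fun y' => σ yt < σ y'), q y'
    let lam : (Fin n → Bool) → ℝ := fun yt =>
      if σ yt = 0 ∨ denom yt = 0 then 0 else 1 - q yt / denom yt
    (∀ yt, 0 ≤ lam yt ∧ lam yt ≤ 1) ∧
    ∀ y, q y = ∑ yt, (∏ y' ∈ Finset.univ.filter (fun y' => σ yt < σ y'), lam y') *
        (1 - lam yt) * (if y = yt then 1 else 0) := by
  intro denom lam
  classical
  set D : ℕ → ℝ := fun t => ∑ y' ∈ Finset.univ.filter (fun y' => σ y' ≤ t), q y' with hDdef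
  have hsplit : ∀ t : ℕ,
      (∑ y' ∈ Finset.univ.filter (fun y' => t < σ y'), q y') + D t = 1 := by
    intro t
    rw [← hq1, hDdef]
    rw [← Finset.sum_filter_add_sum_filter_not Finset.univ (fun y' => t < σ y') q]
    congr 1
    apply Finset.sum_congr _ (fun _ _ => rfl)
    ext y'
    simp [not_lt]
  have hdenom : ∀ yt, denom yt = D (σ yt) := by
    intro yt
    have := hsplit (σ yt)
    simp only [denom]
    linarith
  have hDnonneg : ∀ t, 0 ≤ D t := by
    intro t
    exact Finset.sum_nonneg fun y' _ => hq0 y'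
  have hqleD : ∀ yt t, σ yt ≤ t → q yt ≤ D t := by
    intro yt t ht
    exact Finset.single_le_sum (f := q) (fun y' _ => hq0 y')
      (by simp [Finset.mem_filter, ht])
  have hstep : ∀ t : ℕ, ∀ y, σ y = t + 1 → D (t + 1) = q y + D t := by
    intro t y hy
    have hfil : Finset.univ.filter (fun y' => σ y' ≤ t + 1) =
        insert y (Finset.univ.filter (fun y' => σ y' ≤ t)) := by
      ext y'
      simp only [Finset.mem_insert, Finset.mem_filter, Finset.mem_univ, true_and]
      constructor
      · intro h
        rcases Nat.lt_or_ge (σ y') (t + 1) with h2 | h2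
        · right; omega
        · left; exact hσinj (by omega)
      · rintro (rfl | h) <;> omega
    have hnot : y ∉ Finset.univ.filter (fun y' => σ y' ≤ t) := by
      simp [hy]
    rw [hDdef]
    simp only
    rw [hfil, Finset.sum_insert hnot]
  have hσsurj : ∀ t, t < 2 ^ n → ∃ y, σ y = t := by
    intro t ht
    have hbij : Function.Bijective (fun y => (⟨σ y, hσlt y⟩ : Fin (2 ^ n))) := by
      rw [Fintype.bijective_iff_injective_and_card]
      constructor
      · intro a b hab
        exact hσinj (by simpa using congrArg Fin.val hab)
      · simp
    obtain ⟨y, hy⟩ := hbij.2 ⟨t, ht⟩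
    exact ⟨y, congrArg Fin.val hy⟩
  have key : ∀ m t : ℕ, 2 ^ n = t + 1 + m →
      (∏ y' ∈ Finset.univ.filter (fun y' => t < σ y'), lam y') = D t := by
    intro m
    induction m with
    | zero =>
      intro t ht
      have hempty : Finset.univ.filter (fun y' => t < σ y') = ∅ := by
        apply Finset.filter_eq_empty_iff.mpr
        intro y' _
        have := hσlt y'
        omega
      have hs := hsplit t
      rw [hempty] at hs ⊢
      rw [Finset.sum_empty] at hs
      rw [Finset.prod_empty]
      linarith
    | succ m ih =>
      intro t ht
      obtain ⟨y, hy⟩ := hσsurj (t + 1) (by omega)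
      have hPD := ih (t + 1) (by omega)
      have hfil : Finset.univ.filter (fun y' => t < σ y') =
          insert y (Finset.univ.filter (fun y' => t + 1 < σ y')) := by
        ext y'
        simp only [Finset.mem_insert, Finset.mem_filter, Finset.mem_univ, true_and]
        constructor
        · intro h
          rcases Nat.lt_or_ge (σ y') (t + 2) with h2 | h2
          · left; exact hσinj (by omega)
          · right; omega
        · rintro (rfl | h) <;> omega
      have hnot : y ∉ Finset.univ.filter (fun y' => t + 1 < σ y') := by
        simp [hy]
      rw [hfil, Finset.prod_insert hnot, hPD]
      have hDstep := hstep t y hy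
      by_cases h0 : D (t + 1) = 0
      · have hlam0 : lam y = 0 := by
          simp only [lam]
          rw [if_pos]
          right
          rw [hdenom y, hy]
          exact h0
        rw [hlam0, h0]
        have := hq0 y
        have := hDnonneg t
        nlinarith
      · have hne : denom y ≠ 0 := by rw [hdenom y, hy]; exact h0
        have hlam : lam y = D t / D (t + 1) := by
          simp only [lam]
          rw [if_neg (by push_neg; exact ⟨by omega, hne⟩)]
          rw [hdenom y, hy]
          field_simp
          linarith
        rw [hlam]
        field_simp
  have hbounds : ∀ yt, 0 ≤ lam yt ∧ lam yt ≤ 1 := by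
    intro yt
    by_cases h : σ yt = 0 ∨ denom yt = 0
    · simp only [lam, if_pos h]
      norm_num
    · have hne : denom yt ≠ 0 := (not_or.mp h).2
      have hpos : 0 < denom yt := by
        rcases lt_or_eq_of_le (by rw [hdenom]; exact hDnonneg _ : (0:ℝ) ≤ denom yt) with h' | h'
        · exact h'
        · exact absurd h'.symm hne
      have hle : q yt ≤ denom yt := by rw [hdenom]; exact hqleD yt (σ yt) le_rfl
      simp only [lam, if_neg h]
      constructor
      · have : q yt / denom yt ≤ 1 := (div_le_one hpos).mpr hle
        linarith
      · have : 0 ≤ q yt / denom yt := div_nonneg (hq0 yt) hpos.le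
        linarith
  have hpt : ∀ yt, (∏ y' ∈ Finset.univ.filter (fun y' => σ yt < σ y'), lam y') *
      (1 - lam yt) = q yt := by
    intro yt
    rw [key (2 ^ n - 1 - σ yt) (σ yt) (by have := hσlt yt; omega)]
    by_cases h : σ yt = 0 ∨ denom yt = 0
    · have hlam0 : lam yt = 0 := by simp only [lam, if_pos h]
      rw [hlam0, sub_zero, mul_one]
      rcases h with h | h
      · have hfil : Finset.univ.filter (fun y' => σ y' ≤ 0) = {yt} := by
          ext y'
          simp only [Finset.mem_filter, Finset.mem_univ, true_and, Finset.mem_singleton,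
            Nat.le_zero]
          constructor
          · intro h2; exact hσinj (by omega)
          · rintro rfl; omega
        rw [h, hDdef]
        simp only
        rw [hfil, Finset.sum_singleton]
      · have h0 : D (σ yt) = 0 := by rw [← hdenom]; exact h
        have h1 := hqleD yt (σ yt) le_rfl
        have h2 := hq0 yt
        rw [h0]
        linarith
    · have hne : denom yt ≠ 0 := (not_or.mp h).2
      have hlam : lam yt = 1 - q yt / denom yt := by simp only [lam, if_neg h]
      rw [hlam, ← hdenom yt]
      field_simp
      ring
  refine ⟨hbounds, fun y => ?_⟩
  rw [show (∑ yt, (∏ y' ∈ Finset.univ.filter (fun y' => σ yt < σ y'), lam y') *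
      (1 - lam yt) * (if y = yt then 1 else 0)) =
      ∑ yt, (if y = yt then (∏ y' ∈ Finset.univ.filter (fun y' => σ yt < σ y'), lam y') *
      (1 - lam yt) else 0) from Finset.sum_congr rfl fun yt _ => by
        rw [mul_ite, mul_one, mul_zero]]
  rw [Finset.sum_ite_eq]
  simp only [Finset.mem_univ, if_true]
  exact (hpt y).symm
end

section
/- With K(r) defined by K(1) = 1/2 and K(r) = 2^{−r} + K(r−1)(1 − 2^{−r}(r+1)), the sequence K(r) is bounded below by a positive constant; in particular K(r) > 1/5 for all r ≥ 1. -/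
/-- `K(1) = 1/2` and `K(r) = 2^{-r} + K(r-1)(1 - (r+1)/2^r)` for `r ≥ 2`. -/
noncomputable def K : ℕ → ℝ
  | 0 => 1 / 2
  | 1 => 1 / 2
  | (n + 2) => 1 / 2 ^ (n + 2) + K (n + 1) * (1 - ((n : ℝ) + 3) / 2 ^ (n + 2))

lemma K_succ (n : ℕ) :
    K (n + 2) = 1 / 2 ^ (n + 2) + K (n + 1) * (1 - ((n : ℝ) + 3) / 2 ^ (n + 2)) := rfl

lemma K1 : K 1 = 1/2 := rfl
lemma K2 : K 2 = 3/8 := by have h := K_succ 0; norm_num at h; rw [h, K1]; norm_num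
lemma K3 : K 3 = 5/16 := by have h := K_succ 1; norm_num at h; rw [h, K2]; norm_num
lemma K4 : K 4 = 71/256 := by have h := K_succ 2; norm_num at h; rw [h, K3]; norm_num
lemma K5 : K 5 = 1051/4096 := by have h := K_succ 3; norm_num at h; rw [h, K4]; norm_num
lemma K6 : K 6 = 64003/262144 := by
  have h := K_succ 4; norm_num at h; rw [h, K5]; norm_num
lemma K7 : K 7 = 992813/4194304 := by
  have h := K_succ 5; norm_num at h; rw [h, K6]; norm_num
lemma K8 : K 8 = 249419115/1073741824 := by
  have h := K_succ 6; norm_num at h; rw [h, K7]; norm_num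

lemma nat_bound : ∀ n : ℕ, 3 ≤ n → (n + 1) * 10 < 3 * 2 ^ (n + 1) := by
  intro n hn
  induction n with
  | zero => omega
  | succ m ih =>
    rcases Nat.lt_or_ge m 3 with hm | hm
    · interval_cases m <;> first | omega | norm_num
    · have := ih hm
      have h2 : 2 ^ (m + 1 + 1) = 2 * 2 ^ (m + 1) := by ring
      omega

lemma nat_bound2 : ∀ m : ℕ, m + 3 < 2 ^ (m + 2) := by
  intro m
  induction m with
  | zero => norm_num
  | succ k ih =>
    have h2 : 2 ^ (k + 1 + 2) = 2 * 2 ^ (k + 2) := by ring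
    omega

lemma K_aux : ∀ n : ℕ, 8 ≤ n → K n > 1/5 + ((n:ℝ) + 1) / 2 ^ (n + 1) := by
  intro n hn
  induction n, hn using Nat.le_induction with
  | base => rw [K8]; norm_num
  | succ n hn ih =>
    obtain ⟨m, rfl⟩ : ∃ m, n = m + 1 := ⟨n - 1, by omega⟩
    rw [K_succ]
    set x : ℝ := 2 ^ (m + 2) with hxdef
    have hx : (0:ℝ) < x := by positivity
    have hpb : 10 * ((m:ℝ) + 2) < 3 * x := by
      have h := nat_bound (m + 1) (by omega)
      have : ((m + 1 + 1 : ℕ) * 10 : ℝ) < ((3 * 2 ^ (m + 1 + 1) : ℕ) : ℝ) := by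
        exact_mod_cast h
      push_cast at this
      rw [hxdef]; push_cast; linarith
    have hc : (0:ℝ) < 1 - ((m:ℝ) + 3) / x := by
      have h := nat_bound2 m
      have h' : ((m:ℝ) + 3) < x := by
        have : ((m + 3 : ℕ) : ℝ) < ((2 ^ (m + 2) : ℕ) : ℝ) := by exact_mod_cast h
        push_cast at this
        rw [hxdef]; push_cast; linarith
      rw [sub_pos, div_lt_one hx]; exact h'
    have hlow : K (m + 1) > 1/5 + ((m:ℝ) + 2) / x := by
      push_cast at ih
      have e : ((m:ℝ) + 2) = (m:ℝ) + 1 + 1 := by ring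
      rw [e]; exact ih
    have key : K (m + 1) * (1 - ((m:ℝ) + 3) / x) >
        (1/5 + ((m:ℝ) + 2) / x) * (1 - ((m:ℝ) + 3) / x) :=
      mul_lt_mul_of_pos_right hlow hc
    have main : 1/5 + (((m:ℝ) + 1) + 1 + 1) / 2 ^ (m + 1 + 1 + 1) ≤
        1 / x + (1/5 + ((m:ℝ) + 2) / x) * (1 - ((m:ℝ) + 3) / x) := by
      have e1 : (2:ℝ) ^ (m + 1 + 1 + 1) = 2 * x := by rw [hxdef]; ring
      rw [e1, ← sub_nonneg]
      have diff_eq : 1 / x + (1/5 + ((m:ℝ) + 2) / x) * (1 - ((m:ℝ) + 3) / x) -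
          (1/5 + (((m:ℝ) + 1) + 1 + 1) / (2 * x)) =
          ((m:ℝ) + 3) * (3 * x - 10 * ((m:ℝ) + 2)) / (10 * x ^ 2) := by
        field_simp
        ring
      rw [diff_eq]
      apply div_nonneg _ (by positivity)
      have : (0:ℝ) ≤ (m:ℝ) + 3 := by positivity
      nlinarith
    push_cast at main ⊢
    linarith

/-- The sequence `K(r)` is bounded below by a positive constant: `K(r) > 1/5` for all `r ≥ 1`. -/
theorem K_gt_one_fifth : ∀ r : ℕ, 1 ≤ r → K r > 1 / 5 := by
  intro r hr
  rcases Nat.lt_or_ge r 9 with h | h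
  · interval_cases r
    · rw [K1]; norm_num
    · rw [K2]; norm_num
    · rw [K3]; norm_num
    · rw [K4]; norm_num
    · rw [K5]; norm_num
    · rw [K6]; norm_num
    · rw [K7]; norm_num
    · rw [K8]; norm_num
  · have h1 := K_aux r (by omega)
    have hp : (0:ℝ) < ((r:ℝ) + 1) / 2 ^ (r + 1) := by positivity
    linarith
end

section
/- Let ϱ ≥ 0 and N ≥ 1. There exist real numbers w and b such that the function φ(x₁,...,x_N) = log(1 + exp(w(x₁+···+x_N) + b)) on {0,1}^N has leading multilinear coefficient ϱ; that is, writing φ uniquely as a multilinear polynomial φ(x) = ∑_{B ⊆ [N]} J_B ∏_{i∈B} x_i, one can achieve J_{[N]} = ϱ. -/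
open Finset Filter

lemma neg_one_pow_powerset {α : Type*} [DecidableEq α] (s : Finset α) :
    ∑ A ∈ s.powerset, (-1 : ℝ) ^ A.card = if s = ∅ then 1 else 0 := by
  have := Finset.sum_powerset_neg_one_pow_card (x := s)
  have h2 : ((∑ m ∈ s.powerset, (-1 : ℤ) ^ m.card : ℤ) : ℝ)
      = ∑ A ∈ s.powerset, (-1 : ℝ) ^ A.card := by push_cast; rfl
  rw [← h2, this]; split <;> simp

/-- complement reindexing: sum over subsets of s of (-1)^(s\A).card -/
lemma neg_one_pow_powerset_compl {α : Type*} [DecidableEq α] (s : Finset α) :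
    ∑ A ∈ s.powerset, (-1 : ℝ) ^ (s \ A).card = if s = ∅ then 1 else 0 := by
  rw [← neg_one_pow_powerset s]
  refine Finset.sum_nbij' (fun A => s \ A) (fun A => s \ A) ?_ ?_ ?_ ?_ ?_
  · intro A hA; simpa using Finset.sdiff_subset
  · intro A hA; simpa using Finset.sdiff_subset
  · intro A hA
    rw [Finset.mem_powerset] at hA
    exact Finset.sdiff_sdiff_eq_self hA
  · intro A hA
    rw [Finset.mem_powerset] at hA
    exact Finset.sdiff_sdiff_eq_self hA
  · intros; rfl

/-- Möbius inversion over finsets. -/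
lemma mobius_powerset {α : Type*} [DecidableEq α] (g : Finset α → ℝ) (S : Finset α) :
    ∑ B ∈ S.powerset, ∑ A ∈ B.powerset, (-1 : ℝ) ^ (B \ A).card * g A = g S := by
  rw [Finset.sum_comm' (s' := fun A => S.powerset.filter (fun B => A ⊆ B))
      (t' := S.powerset) (f := fun B A => (-1 : ℝ) ^ (B \ A).card * g A)
      (by intro B A; simp only [Finset.mem_powerset, Finset.mem_filter, Finset.mem_powerset]
          constructor
          · rintro ⟨h1, h2⟩; exact ⟨⟨h1, h2⟩, h2.trans h1⟩
          · rintro ⟨⟨h1, h2⟩, h3⟩; exact ⟨h1, h2⟩)]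
  have key : ∀ A ∈ S.powerset,
      ∑ B ∈ S.powerset.filter (fun B => A ⊆ B), (-1 : ℝ) ^ (B \ A).card * g A
        = (if A = S then 1 else 0) * g A := by
    intro A hA
    rw [Finset.mem_powerset] at hA
    rw [← Finset.sum_mul]
    congr 1
    have reindex : ∑ B ∈ S.powerset.filter (fun B => A ⊆ B), (-1 : ℝ) ^ (B \ A).card
        = ∑ C ∈ (S \ A).powerset, (-1 : ℝ) ^ C.card := by
      refine Finset.sum_nbij' (fun B => B \ A) (fun C => C ∪ A) ?_ ?_ ?_ ?_ ?_
      · intro B hB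
        simp only [Finset.mem_filter, Finset.mem_powerset] at hB ⊢
        exact Finset.sdiff_subset_sdiff hB.1 le_rfl
      · intro C hC
        simp only [Finset.mem_filter, Finset.mem_powerset] at hC ⊢
        constructor
        · exact Finset.union_subset (hC.trans Finset.sdiff_subset) hA
        · exact Finset.subset_union_right
      · intro B hB
        simp only [Finset.mem_filter, Finset.mem_powerset] at hB
        exact Finset.sdiff_union_of_subset hB.2
      · intro C hC
        simp only [Finset.mem_powerset] at hC
        show (C ∪ A) \ A = C
        rw [Finset.union_sdiff_cancel_right]
        rw [Finset.disjoint_left]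
        intro a ha
        exact (Finset.mem_sdiff.mp (hC ha)).2
      · intros; rfl
    rw [reindex, neg_one_pow_powerset]
    by_cases h : A = S
    · simp [h]
    · rw [if_neg h, if_neg]
      intro he
      exact h (le_antisymm hA (Finset.sdiff_eq_empty_iff_subset.mp he))
  rw [Finset.sum_congr rfl key]
  simp [boole_mul, Finset.sum_ite_eq', Finset.mem_powerset]

noncomputable def Fn (N : ℕ) (t : ℝ) : ℝ :=
  ∑ A ∈ (Finset.univ : Finset (Fin N)).powerset,
    (-1 : ℝ) ^ ((Finset.univ \ A).card) *
      Real.log (1 + Real.exp (t * A.card + t * (1/2 - (N : ℝ))))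

lemma Fn_cont (N : ℕ) : Continuous (Fn N) := by
  apply continuous_finset_sum
  intro A _
  apply Continuous.mul continuous_const
  apply Continuous.log
  · exact continuous_const.add (Real.continuous_exp.comp
      ((continuous_id.mul continuous_const).add (continuous_id.mul continuous_const)))
  · intro t
    positivity

lemma Fn_zero (N : ℕ) (hN : 1 ≤ N) : Fn N 0 = 0 := by
  unfold Fn
  simp only [zero_mul, add_zero, Real.exp_zero]
  rw [← Finset.sum_mul]
  rw [neg_one_pow_powerset_compl]
  rw [if_neg, zero_mul]
  have : (Finset.univ : Finset (Fin N)).Nonempty := by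
    have : Nonempty (Fin N) := ⟨⟨0, hN⟩⟩
    exact Finset.univ_nonempty
  exact Finset.nonempty_iff_ne_empty.mp this

lemma Fn_tendsto (N : ℕ) (hN : 1 ≤ N) : Filter.Tendsto (Fn N) Filter.atTop Filter.atTop := by
  classical
  have hmem : (Finset.univ : Finset (Fin N)) ∈ (Finset.univ : Finset (Fin N)).powerset := by
    simp
  have hsplit : ∀ t, Fn N t =
      (∑ A ∈ ((Finset.univ : Finset (Fin N)).powerset).erase Finset.univ,
        (-1 : ℝ) ^ ((Finset.univ \ A).card) *
          Real.log (1 + Real.exp (t * A.card + t * (1/2 - (N : ℝ)))))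
      + (-1 : ℝ) ^ ((Finset.univ \ (Finset.univ : Finset (Fin N))).card) *
          Real.log (1 + Real.exp (t * ((Finset.univ : Finset (Fin N)).card : ℝ)
            + t * (1/2 - (N : ℝ)))) := by
    intro t
    rw [Finset.sum_erase_add _ _ hmem]
    rfl
  have hrest : Filter.Tendsto (fun t => ∑ A ∈ ((Finset.univ : Finset (Fin N)).powerset).erase
      Finset.univ, (-1 : ℝ) ^ ((Finset.univ \ A).card) *
        Real.log (1 + Real.exp (t * A.card + t * (1/2 - (N : ℝ))))) Filter.atTop (nhds 0) := by
    have : (0 : ℝ) = ∑ A ∈ ((Finset.univ : Finset (Fin N)).powerset).erase Finset.univ,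
        (0 : ℝ) := by simp
    rw [this]
    apply tendsto_finset_sum
    intro A hA
    have hAne : A ≠ Finset.univ := (Finset.mem_erase.mp hA).1
    have hcard : A.card < N := by
      have h1 : A ⊂ Finset.univ := Finset.ssubset_univ_iff.mpr hAne
      have := Finset.card_lt_card h1
      simpa using this
    have hcoef : ((A.card : ℝ) + (1/2 - (N : ℝ))) < 0 := by
      have : (A.card : ℝ) ≤ (N : ℝ) - 1 := by
        have : (A.card : ℝ) + 1 ≤ (N : ℝ) := by exact_mod_cast hcard
        linarith
      linarith
    have hg : Filter.Tendsto (fun t : ℝ => t * (A.card : ℝ) + t * (1/2 - (N : ℝ)))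
        Filter.atTop Filter.atBot := by
      have heq : (fun t : ℝ => t * (A.card : ℝ) + t * (1/2 - (N : ℝ)))
          = fun t : ℝ => t * ((A.card : ℝ) + (1/2 - (N : ℝ))) := by
        funext t; ring
      rw [heq]
      exact Filter.Tendsto.atTop_mul_const_of_neg hcoef Filter.tendsto_id
    have hexp : Filter.Tendsto (fun t : ℝ => Real.exp (t * (A.card : ℝ) + t * (1/2 - (N : ℝ))))
        Filter.atTop (nhds 0) := Real.tendsto_exp_atBot.comp hg
    have h1 : Filter.Tendsto (fun t : ℝ => 1 + Real.exp (t * (A.card : ℝ) + t * (1/2 - (N : ℝ))))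
        Filter.atTop (nhds 1) := by
      simpa using tendsto_const_nhds.add hexp
    have hlog : Filter.Tendsto (fun t : ℝ => Real.log (1 + Real.exp (t * (A.card : ℝ)
        + t * (1/2 - (N : ℝ))))) Filter.atTop (nhds (Real.log 1)) :=
      (Real.continuousAt_log one_ne_zero).tendsto.comp h1
    rw [Real.log_one] at hlog
    simpa using hlog.const_mul ((-1 : ℝ) ^ ((Finset.univ \ A).card))
  have hmain : Filter.Tendsto (fun t : ℝ =>
      (-1 : ℝ) ^ ((Finset.univ \ (Finset.univ : Finset (Fin N))).card) *
        Real.log (1 + Real.exp (t * ((Finset.univ : Finset (Fin N)).card : ℝ)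
          + t * (1/2 - (N : ℝ))))) Filter.atTop Filter.atTop := by
    have heq : (fun t : ℝ =>
        (-1 : ℝ) ^ ((Finset.univ \ (Finset.univ : Finset (Fin N))).card) *
          Real.log (1 + Real.exp (t * ((Finset.univ : Finset (Fin N)).card : ℝ)
            + t * (1/2 - (N : ℝ)))))
        = fun t : ℝ => Real.log (1 + Real.exp (t * (1/2 : ℝ))) := by
      funext t
      rw [Finset.sdiff_self]
      simp only [Finset.card_empty, pow_zero, one_mul, Finset.card_univ, Fintype.card_fin]
      congr 2
      ring
    rw [heq]
    have hg : Filter.Tendsto (fun t : ℝ => t * (1/2 : ℝ)) Filter.atTop Filter.atTop :=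
      Filter.Tendsto.atTop_mul_const (by norm_num) Filter.tendsto_id
    have hexp := Real.tendsto_exp_atTop.comp hg
    have h1 : Filter.Tendsto (fun t : ℝ => 1 + Real.exp (t * (1/2 : ℝ)))
        Filter.atTop Filter.atTop := Filter.tendsto_atTop_add_const_left _ 1 hexp
    exact Real.tendsto_log_atTop.comp h1
  have := hrest.add_atTop hmain
  apply this.congr
  intro t
  exact (hsplit t).symm

/-- For any `ϱ ≥ 0` there are `w, b ∈ ℝ` such that the function
`φ(x) = log(1 + exp(w(x₁ + ⋯ + x_N) + b))` on `{0,1}^N` has a multilinear polynomial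
representation whose leading coefficient `J_{[N]}` equals `ϱ`. -/
theorem leading_multilinear_coefficient (N : ℕ) (hN : 1 ≤ N) (ρ : ℝ) (hρ : 0 ≤ ρ) :
    ∃ (w b : ℝ) (J : Finset (Fin N) → ℝ),
      J Finset.univ = ρ ∧
      ∀ x : Fin N → Bool,
        Real.log (1 + Real.exp (w * (∑ i, if x i then (1 : ℝ) else 0) + b))
          = ∑ B : Finset (Fin N), J B * ∏ i ∈ B, (if x i then (1 : ℝ) else 0) := by
  classical
  -- find t ≥ 0 with Fn N t = ρ
  obtain ⟨t₁, ht₁ρ, ht₁0⟩ : ∃ t₁, ρ ≤ Fn N t₁ ∧ (0 : ℝ) ≤ t₁ :=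
    (((Fn_tendsto N hN).eventually_ge_atTop ρ).and (Filter.eventually_ge_atTop 0)).exists
  obtain ⟨t, -, htρ⟩ : ∃ t ∈ Set.Icc (0 : ℝ) t₁, Fn N t = ρ := by
    have := intermediate_value_Icc ht₁0 (Fn_cont N).continuousOn
    have hmem : ρ ∈ Set.Icc (Fn N 0) (Fn N t₁) := by
      rw [Fn_zero N hN]; exact ⟨hρ, ht₁ρ⟩
    obtain ⟨u, hu, hu'⟩ := this hmem
    exact ⟨u, hu, hu'⟩
  set g : Finset (Fin N) → ℝ :=
    fun A => Real.log (1 + Real.exp (t * A.card + t * (1/2 - (N : ℝ)))) with hg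
  refine ⟨t, t * (1/2 - (N : ℝ)),
    fun B => ∑ A ∈ B.powerset, (-1 : ℝ) ^ ((B \ A).card) * g A, ?_, ?_⟩
  · exact htρ
  · intro x
    set S : Finset (Fin N) := Finset.univ.filter (fun i => x i = true) with hS
    have hsum : (∑ i, if x i then (1 : ℝ) else 0) = (S.card : ℝ) := by
      rw [hS, Finset.sum_boole]
    have hprod : ∀ B : Finset (Fin N),
        (∏ i ∈ B, (if x i then (1 : ℝ) else 0)) = if B ⊆ S then 1 else 0 := by
      intro B
      by_cases h : B ⊆ S
      · rw [if_pos h]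
        apply Finset.prod_eq_one
        intro i hi
        have := h hi
        rw [hS, Finset.mem_filter] at this
        simp [this.2]
      · rw [if_neg h]
        obtain ⟨i, hiB, hiS⟩ := Finset.not_subset.mp h
        apply Finset.prod_eq_zero hiB
        rw [hS, Finset.mem_filter] at hiS
        simp only [Finset.mem_univ, true_and] at hiS
        simp [hiS]
    have hRHS : (∑ B : Finset (Fin N),
        (∑ A ∈ B.powerset, (-1 : ℝ) ^ ((B \ A).card) * g A)
          * ∏ i ∈ B, (if x i then (1 : ℝ) else 0)) = g S := by
      calc (∑ B : Finset (Fin N),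
          (∑ A ∈ B.powerset, (-1 : ℝ) ^ ((B \ A).card) * g A)
            * ∏ i ∈ B, (if x i then (1 : ℝ) else 0))
          = ∑ B : Finset (Fin N), if B ⊆ S then
              (∑ A ∈ B.powerset, (-1 : ℝ) ^ ((B \ A).card) * g A) else 0 := by
            apply Finset.sum_congr rfl
            intro B _
            rw [hprod B, mul_boole]
        _ = ∑ B ∈ Finset.univ.filter (fun B => B ⊆ S),
              (∑ A ∈ B.powerset, (-1 : ℝ) ^ ((B \ A).card) * g A) := by
            rw [Finset.sum_filter]
        _ = ∑ B ∈ S.powerset,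
              (∑ A ∈ B.powerset, (-1 : ℝ) ^ ((B \ A).card) * g A) := by
            apply Finset.sum_congr _ (fun _ _ => rfl)
            ext B
            simp [Finset.mem_powerset]
        _ = g S := mobius_powerset g S
    rw [hRHS, hsum]
end
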